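/- For the Lotka–Volterra vector field X, the Lagrangian Yang–Mills electromagnetic-like energy EYM(x) = (1/2)·Trace(F(x)·F(x)ᵗ), where F(x) = −N(x), satisfies EYM(x) = (1/4)[ (a₁₂x₁ − a₂₁x₂)² + (a₁₃x₁ − a₃₁x₃)² + (a₂₃x₂ − a₃₂x₃)² ]; consequently, for ρ ≥ 0, a point x ∈ ℝ³ lies on the constant level surface EYM(x) = ρ if and only if (a₁₂x₁ − a₂₁x₂)² + (a₁₃x₁ − a₃₁x₃)² + (a₂₃x₂ − a₃₂x₃)² = 4ρ. -/

import Mathlib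

open Matrix

/-- Partial derivative of `f : ℝ³ → ℝ` with respect to the `j`-th coordinate. -/
noncomputable def pd (f : (Fin 3 → ℝ) → ℝ) (j : Fin 3) (x : Fin 3 → ℝ) : ℝ :=
  fderiv ℝ f x (Pi.single j 1)

/-- The Lotka–Volterra vector field on ℝ³. -/
noncomputable def LV (A : Fin 3 → Fin 3 → ℝ) (B : Fin 3 → ℝ) (x : Fin 3 → ℝ) : Fin 3 → ℝ :=
  fun i => x i * (B i - ∑ j, A i j * x j)

/-- The least squares Lagrangian associated with a vector field `X`. -/
noncomputable def lsqL (X : (Fin 3 → ℝ) → (Fin 3 → ℝ)) (x y : Fin 3 → ℝ) : ℝ :=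
  ∑ i, (y i - X x i) ^ 2

/-- The semispray components produced by the least squares Lagrangian of `X`. -/
noncomputable def semispray (X : (Fin 3 → ℝ) → (Fin 3 → ℝ)) (x y : Fin 3 → ℝ) (k : Fin 3) : ℝ :=
  -(1 / 2) * ((∑ j, (pd (fun u => X u k) j x - pd (fun u => X u j) k x) * y j)
    + ∑ j, pd (fun u => X u j) k x * X x j)

/-- The Jacobian matrix `J(x) = (∂Xⁱ/∂xʲ)(x)` of a vector field `X`. -/
noncomputable def Jmat (X : (Fin 3 → ℝ) → (Fin 3 → ℝ)) (x : Fin 3 → ℝ) :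
    Matrix (Fin 3) (Fin 3) ℝ :=
  Matrix.of fun i j => pd (fun u => X u i) j x

/-- The least squares Hamiltonian associated with a vector field `X`. -/
noncomputable def Ham (X : (Fin 3 → ℝ) → (Fin 3 → ℝ)) (x p : Fin 3 → ℝ) : ℝ :=
  (1 / 4) * (∑ i, (p i) ^ 2) + ∑ k, X x k * p k

/-- The Lagrangian canonical nonlinear connection matrix `N(x) = -(1/2)(J(x) - J(x)ᵗ)`. -/
noncomputable def NL (A : Fin 3 → Fin 3 → ℝ) (B : Fin 3 → ℝ) (x : Fin 3 → ℝ) :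
    Matrix (Fin 3) (Fin 3) ℝ :=
  (-(1 / 2) : ℝ) • (Jmat (LV A B) x - (Jmat (LV A B) x)ᵀ)

/-- The Lagrangian d-torsion matrices: entry `(i, j)` of `Rtor A B k x` is
`Rʲₖⁱ(x) = ∂Nʲⁱ/∂xᵏ(x) − ∂Nₖⁱ/∂xʲ(x)`. -/
noncomputable def Rtor (A : Fin 3 → Fin 3 → ℝ) (B : Fin 3 → ℝ) (k : Fin 3) (x : Fin 3 → ℝ) :
    Matrix (Fin 3) (Fin 3) ℝ :=
  Matrix.of fun i j => pd (fun u => NL A B u i j) k x - pd (fun u => NL A B u i k) j x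

/-- The Lagrangian Yang–Mills electromagnetic-like energy
`EYM(x) = (1/2)·Trace(F(x)·F(x)ᵗ)` with `F(x) = -N(x)`. -/
noncomputable def EYM (A : Fin 3 → Fin 3 → ℝ) (B : Fin 3 → ℝ) (x : Fin 3 → ℝ) : ℝ :=
  (1 / 2) * Matrix.trace ((-(NL A B x)) * (-(NL A B x))ᵀ)


noncomputable def proj3 (i : Fin 3) : (Fin 3 → ℝ) →L[ℝ] ℝ :=
  ContinuousLinearMap.proj (R := ℝ) (φ := fun _ : Fin 3 => ℝ) i

lemma pd_LV (A : Fin 3 → Fin 3 → ℝ) (B : Fin 3 → ℝ) (i j : Fin 3) (x : Fin 3 → ℝ) :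
    pd (fun u => LV A B u i) j x
      = (if i = j then (B i - ∑ k, A i k * x k) else 0) - x i * A i j := by
  have hg : HasFDerivAt (fun u : Fin 3 → ℝ => u i) (proj3 i) x := (proj3 i).hasFDerivAt
  have hsum : HasFDerivAt (fun u : Fin 3 → ℝ => ∑ k, A i k * u k)
      (∑ k, A i k • proj3 k) x := by
    apply HasFDerivAt.fun_sum
    intro k _
    exact (proj3 k).hasFDerivAt.const_mul (A i k)
  have hd : HasFDerivAt (fun u : Fin 3 → ℝ => B i - ∑ k, A i k * u k)
      (-(∑ k, A i k • proj3 k)) x := by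
    simpa using (hasFDerivAt_const (B i) x).fun_sub hsum
  have hf := hg.fun_mul hd
  have hfe : (fun u : Fin 3 → ℝ => u i * (B i - ∑ k, A i k * u k)) = fun u => LV A B u i := rfl
  rw [hfe] at hf
  unfold pd
  rw [hf.fderiv]
  simp only [ContinuousLinearMap.add_apply, ContinuousLinearMap.smul_apply,
    ContinuousLinearMap.neg_apply, ContinuousLinearMap.coe_sum', Finset.sum_apply,
    proj3, ContinuousLinearMap.proj_apply, Pi.single_apply, smul_eq_mul, mul_ite,
    mul_one, mul_zero, Finset.sum_ite_eq', Finset.mem_univ, if_true]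
  by_cases h : i = j
  · simp [h, eq_comm]; try ring
  · simp [h, eq_comm]; try ring

lemma EYM_formula (A : Fin 3 → Fin 3 → ℝ) (B : Fin 3 → ℝ) (x : Fin 3 → ℝ) :
    EYM A B x =
      (1 / 4) * ((A 0 1 * x 0 - A 1 0 * x 1) ^ 2 + (A 0 2 * x 0 - A 2 0 * x 2) ^ 2
        + (A 1 2 * x 1 - A 2 1 * x 2) ^ 2) := by
  unfold EYM NL Jmat
  simp [Matrix.trace, Matrix.diag, Matrix.mul_apply, Matrix.transpose_apply,
    Matrix.smul_apply, Matrix.sub_apply, Matrix.neg_apply, Fin.sum_univ_three, pd_LV]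
  ring

/-- the explicit formula for the Lagrangian Yang–Mills
electromagnetic-like energy, and the description of its constant level surfaces. -/
theorem stmt_6 (A : Fin 3 → Fin 3 → ℝ) (B : Fin 3 → ℝ)
    (hA : ∀ i j, 0 < A i j) (hB : ∀ i, 0 < B i) :
    (∀ x : Fin 3 → ℝ,
      EYM A B x =
        (1 / 4) * ((A 0 1 * x 0 - A 1 0 * x 1) ^ 2 + (A 0 2 * x 0 - A 2 0 * x 2) ^ 2
          + (A 1 2 * x 1 - A 2 1 * x 2) ^ 2)) ∧
    (∀ ρ : ℝ, 0 ≤ ρ → ∀ x : Fin 3 → ℝ,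
      EYM A B x = ρ ↔
        (A 0 1 * x 0 - A 1 0 * x 1) ^ 2 + (A 0 2 * x 0 - A 2 0 * x 2) ^ 2
          + (A 1 2 * x 1 - A 2 1 * x 2) ^ 2 = 4 * ρ) := by
  constructor
  · exact fun x => EYM_formula A B x
  · intro r _ x
    rw [EYM_formula A B x]
    constructor <;> intro h <;> linarith
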